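/- In a median graph G with a fixed basepoint v₀, for all vertices u, v with u ∈ I(v₀,v), the ladder set L_{u,v} is a POF; moreover, there exists a shortest (u,v)-path whose first |L_{u,v}| edges belong to the classes of L_{u,v}. -/

import Mathlib

namespace MedianPaper

variable {V : Type*}

/-- The metric interval `I(u,v)`: vertices on shortest `(u,v)`-paths. -/
def interval (G : SimpleGraph V) (u v : V) : Set V :=
  {w | G.dist u w + G.dist w v = G.dist u v}

/-- A median graph: a connected graph in which every triple of vertices
has a unique median. -/
def MedianGraph (G : SimpleGraph V) : Prop :=
  G.Connected ∧ ∀ x y z : V, ∃! m : V,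
    m ∈ interval G x y ∧ m ∈ interval G y z ∧ m ∈ interval G z x

/-- `u v x y` span a 4-cycle `u-v-y-x-u`, with opposite edge pairs
`(uv, xy)` and `(ux, vy)`. -/
def IsSquare (G : SimpleGraph V) (u v x y : V) : Prop :=
  G.Adj u v ∧ G.Adj x y ∧ G.Adj u x ∧ G.Adj v y ∧ u ≠ y ∧ v ≠ x

/-- Two edges are in relation Θ₀ if they are opposite edges of a common 4-cycle. -/
def Theta0 (G : SimpleGraph V) (e f : Sym2 V) : Prop :=
  ∃ u v x y : V, IsSquare G u v x y ∧ e = s(u, v) ∧ f = s(x, y)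

/-- Θ : the reflexive-transitive closure of Θ₀ on the edges of `G`. -/
def Theta (G : SimpleGraph V) (e f : Sym2 V) : Prop :=
  e ∈ G.edgeSet ∧ f ∈ G.edgeSet ∧ Relation.ReflTransGen (Theta0 G) e f

/-- The Θ-classes of `G`: equivalence classes of edges under Θ. -/
def ThetaClass (G : SimpleGraph V) (C : Set (Sym2 V)) : Prop :=
  ∃ e ∈ G.edgeSet, C = {f | Theta G e f}

/-- The edge set `C` separates `u` from `v` : they lie in different
components of `G` minus `C`. -/
def Separates (G : SimpleGraph V) (C : Set (Sym2 V)) (u v : V) : Prop :=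
  ¬ (G.deleteEdges C).Reachable u v

/-- The signature `σ_{u,v}`: Θ-classes separating `u` from `v`. -/
def signature (G : SimpleGraph V) (u v : V) : Set (Set (Sym2 V)) :=
  {C | ThetaClass G C ∧ Separates G C u v}

/-- `H`, `H'` are the two connected components (halfspaces) of `G` deprived
of the edges in `C`. -/
def IsHalfspacePair (G : SimpleGraph V) (C : Set (Sym2 V)) (H H' : Set V) : Prop :=
  H.Nonempty ∧ H'.Nonempty ∧ Disjoint H H' ∧ H ∪ H' = Set.univ ∧
  (∀ x ∈ H, ∀ y ∈ H, (G.deleteEdges C).Reachable x y) ∧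
  (∀ x ∈ H', ∀ y ∈ H', (G.deleteEdges C).Reachable x y) ∧
  (∀ x ∈ H, ∀ y ∈ H', ¬ (G.deleteEdges C).Reachable x y)

/-- The boundary of a halfspace `H` of the Θ-class `C` : vertices of `H`
incident to an edge of `C`. -/
def boundarySet (G : SimpleGraph V) (C : Set (Sym2 V)) (H : Set V) : Set V :=
  {x | x ∈ H ∧ ∃ y, G.Adj x y ∧ s(x, y) ∈ C}

/-- Orthogonality of Θ-classes: there is a common square using both. -/
def Orthogonal (G : SimpleGraph V) (C₁ C₂ : Set (Sym2 V)) : Prop :=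
  ∃ u v x y : V, IsSquare G u v x y ∧
    s(u, v) ∈ C₁ ∧ s(x, y) ∈ C₁ ∧ s(u, x) ∈ C₂ ∧ s(v, y) ∈ C₂

/-- A pairwise orthogonal family (POF) of Θ-classes. -/
def IsPOF (G : SimpleGraph V) (X : Set (Set (Sym2 V))) : Prop :=
  (∀ C ∈ X, ThetaClass G C) ∧
  ∀ C ∈ X, ∀ C' ∈ X, C ≠ C' → Orthogonal G C C'

/-- The `k`-dimensional hypercube graph, on subsets of `{1,…,k}`;
two subsets are adjacent iff their symmetric difference has one element. -/
def cubeGraph (k : ℕ) : SimpleGraph (Finset (Fin k)) where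
  Adj A B := (symmDiff A B).card = 1
  symm := by
    refine ⟨fun A B h => ?_⟩
    rwa [symmDiff_comm] at h
  loopless := by
    refine ⟨fun A h => ?_⟩
    simp [symmDiff_self] at h

/-- `S` induces a hypercube of dimension `k` in `G`. -/
def IsCubeDim (G : SimpleGraph V) (S : Set V) (k : ℕ) : Prop :=
  Nonempty ((G.induce S) ≃g cubeGraph k)

/-- `S` induces a hypercube in `G`. -/
def IsInducedCube (G : SimpleGraph V) (S : Set V) : Prop :=
  ∃ k, IsCubeDim G S k

/-- The dimension of `G` is `d`: the largest dimension of an induced hypercube. -/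
def GraphDim (G : SimpleGraph V) (d : ℕ) : Prop :=
  (∃ S : Set V, IsCubeDim G S d) ∧ ∀ (S : Set V) (k : ℕ), IsCubeDim G S k → k ≤ d

/-- The Θ-classes of the edges of the induced subgraph on `S`. -/
def cubeClasses (G : SimpleGraph V) (S : Set V) : Set (Set (Sym2 V)) :=
  {C | ThetaClass G C ∧ ∃ x ∈ S, ∃ y ∈ S, G.Adj x y ∧ s(x, y) ∈ C}

/-- With the `v₀`-orientation, `b ∈ S` is the basis of `S`: all edges of `S`
incident to `b` are outgoing from `b`. -/
def IsBasis (G : SimpleGraph V) (v₀ : V) (S : Set V) (b : V) : Prop :=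
  b ∈ S ∧ ∀ w ∈ S, G.Adj b w → G.dist v₀ b < G.dist v₀ w

/-- With the `v₀`-orientation, `b ∈ S` is the anti-basis of `S`: all edges of `S`
incident to `b` are ingoing to `b`. -/
def IsAntiBasis (G : SimpleGraph V) (v₀ : V) (S : Set V) (b : V) : Prop :=
  b ∈ S ∧ ∀ w ∈ S, G.Adj b w → G.dist v₀ w < G.dist v₀ b

/-- `ℰ⁻(v)` : the Θ-classes containing at least one edge ingoing to `v`. -/
def inClasses (G : SimpleGraph V) (v₀ v : V) : Set (Set (Sym2 V)) :=
  {C | ThetaClass G C ∧ ∃ u, G.Adj u v ∧ G.dist v₀ u < G.dist v₀ v ∧ s(u, v) ∈ C}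

/-- The ladder set `L_{u,v}`: classes of the signature `σ_{u,v}` having an
edge incident to `u`. -/
def ladder (G : SimpleGraph V) (u v : V) : Set (Set (Sym2 V)) :=
  {C | C ∈ signature G u v ∧ ∃ w, G.Adj u w ∧ s(u, w) ∈ C}

/-- A POF each of whose classes has an edge outgoing from `u`. -/
def OutgoingPOF (G : SimpleGraph V) (v₀ u : V) (L : Set (Set (Sym2 V))) : Prop :=
  IsPOF G L ∧ ∀ C ∈ L, ∃ w, G.Adj u w ∧ G.dist v₀ u < G.dist v₀ w ∧ s(u, w) ∈ C

/-- A POF each of whose classes has an edge ingoing to `u`. -/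
def IngoingPOF (G : SimpleGraph V) (v₀ u : V) (X : Set (Set (Sym2 V))) : Prop :=
  IsPOF G X ∧ ∀ C ∈ X, ∃ w, G.Adj w u ∧ G.dist v₀ w < G.dist v₀ u ∧ s(w, u) ∈ C

/-- `m` is a median of the triple `x, y, z`. -/
def IsMedian (G : SimpleGraph V) (x y z m : V) : Prop :=
  m ∈ interval G x y ∧ m ∈ interval G y z ∧ m ∈ interval G z x

/-- `b` is the milestone following `a` on the way to `v`: `b` is the anti-basis of
the induced hypercube with basis `a` whose Θ-classes are the ladder set `L_{a,v}`. -/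
def NextMilestone (G : SimpleGraph V) (v₀ v a b : V) : Prop :=
  ∃ S : Set V, IsInducedCube G S ∧ IsBasis G v₀ S a ∧ IsAntiBasis G v₀ S b ∧
    cubeClasses G S = ladder G a v

/-- The milestone set `Π(u,v)`: vertices obtained from `u` by iterating the
next-milestone step towards `v`. -/
def MilestoneSet (G : SimpleGraph V) (v₀ u v : V) : Set V :=
  {p | Relation.ReflTransGen (fun a b => NextMilestone G v₀ v a b) u p}

/-- The penultimate milestone `π̄(u,v)`: the milestone of `Π(u,v)` other than `v`
closest to `v`, i.e. whose next milestone is `v` itself. -/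
def IsPenultimate (G : SimpleGraph V) (v₀ u v p : V) : Prop :=
  p ∈ MilestoneSet G v₀ u v ∧ p ≠ v ∧ NextMilestone G v₀ v p v

/-- A convex set of vertices. -/
def ConvexSet (G : SimpleGraph V) (H : Set V) : Prop :=
  ∀ u ∈ H, ∀ v ∈ H, interval G u v ⊆ H

/-- A gated set of vertices: each vertex has a gate in `H`. -/
def GatedSet (G : SimpleGraph V) (H : Set V) : Prop :=
  ∀ x : V, ∃ g ∈ H, ∀ h ∈ H, g ∈ interval G x h


section Aux

variable {V : Type*} {G : SimpleGraph V}

private lemma mem_interval_iff {u v w : V} :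
    w ∈ interval G u v ↔ G.dist u w + G.dist w v = G.dist u v := Iff.rfl

/-- Across any edge, distances to a fixed vertex differ by exactly one. -/
private lemma adj_dist_cases (hmed : MedianGraph G) {a b : V} (hab : G.Adj a b) (x : V) :
    G.dist x b = G.dist x a + 1 ∨ G.dist x a = G.dist x b + 1 := by
  obtain ⟨hconn, hm⟩ := hmed
  obtain ⟨m, ⟨h1, h2, h3⟩, -⟩ := hm a b x
  rw [mem_interval_iff] at h1 h2 h3
  have hd : G.dist a b = 1 := SimpleGraph.dist_eq_one_iff_adj.mpr hab
  have : G.dist a m = 0 ∨ G.dist m b = 0 := by omega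
  rcases this with h | h
  · have hma : m = a := hconn.dist_eq_zero_iff.mp (by rwa [SimpleGraph.dist_comm] at h)
    rw [hma] at h2
    left
    have hba : G.dist b a = 1 := SimpleGraph.dist_eq_one_iff_adj.mpr hab.symm
    have cxa : G.dist a x = G.dist x a := SimpleGraph.dist_comm
    have cxb : G.dist b x = G.dist x b := SimpleGraph.dist_comm
    omega
  · have hmb : m = b := hconn.dist_eq_zero_iff.mp h
    rw [hmb] at h3
    right
    have hba : G.dist b a = 1 := SimpleGraph.dist_eq_one_iff_adj.mpr hab.symm
    have cxa : G.dist b x = G.dist x b := SimpleGraph.dist_comm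
    omega

private lemma adj_dist_ne (hmed : MedianGraph G) {a b : V} (hab : G.Adj a b) (x : V) :
    G.dist x a ≠ G.dist x b := by
  rcases adj_dist_cases hmed hab x with h | h <;> omega

/-- Two distinct neighbours of a common vertex are at distance two. -/
private lemma dist_two (hmed : MedianGraph G) {u w₁ w₂ : V} (h1 : G.Adj u w₁)
    (h2 : G.Adj u w₂) (hne : w₁ ≠ w₂) : G.dist w₁ w₂ = 2 := by
  have hu : G.dist w₁ u = 1 := SimpleGraph.dist_eq_one_iff_adj.mpr h1.symm
  have h0 : G.dist w₁ w₂ ≠ 0 := fun h => hne (hmed.1.dist_eq_zero_iff.mp h)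
  rcases adj_dist_cases hmed h2 w₁ with h | h <;> omega

/-- The quadrangle condition: two distinct downward neighbours of `u`
(towards `v`) have a common neighbour other than `u`. -/
private lemma quadrangle (hmed : MedianGraph G) {u w₁ w₂ v : V}
    (h1 : G.Adj u w₁) (h2 : G.Adj u w₂) (hne : w₁ ≠ w₂)
    (hd1 : G.dist u v = G.dist w₁ v + 1) (hd2 : G.dist u v = G.dist w₂ v + 1) :
    ∃ m, G.Adj w₁ m ∧ G.Adj w₂ m ∧ u ≠ m := by
  obtain ⟨m, ⟨hA, hB, hC⟩, -⟩ := hmed.2 w₁ w₂ v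
  rw [mem_interval_iff] at hA hB hC
  have h12 : G.dist w₁ w₂ = 2 := dist_two hmed h1 h2 hne
  have h21 : G.dist w₂ w₁ = 2 := by rw [SimpleGraph.dist_comm]; exact h12
  have cv1 : G.dist v w₁ = G.dist w₁ v := SimpleGraph.dist_comm
  have cv2 : G.dist v w₂ = G.dist w₂ v := SimpleGraph.dist_comm
  have cmv : G.dist v m = G.dist m v := SimpleGraph.dist_comm
  have hne1 : G.dist w₁ m ≠ 0 := by
    intro h
    have hmw : m = w₁ := hmed.1.dist_eq_zero_iff.mp (by rwa [SimpleGraph.dist_comm] at h)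
    rw [hmw] at hB
    omega
  have hne2 : G.dist m w₂ ≠ 0 := by
    intro h
    have hmw : m = w₂ := hmed.1.dist_eq_zero_iff.mp h
    rw [hmw] at hC
    have cw : G.dist w₂ w₁ = G.dist w₁ w₂ := SimpleGraph.dist_comm
    omega
  have hm1 : G.dist w₁ m = 1 := by omega
  have hm2 : G.dist m w₂ = 1 := by omega
  have hum : u ≠ m := by
    intro h
    subst h
    have : G.dist u w₂ = 1 := SimpleGraph.dist_eq_one_iff_adj.mpr h2
    have cw : G.dist w₂ u = G.dist u w₂ := SimpleGraph.dist_comm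
    have cuv : G.dist u v = G.dist u v := rfl
    omega
  exact ⟨m, SimpleGraph.dist_eq_one_iff_adj.mp hm1,
    SimpleGraph.dist_eq_one_iff_adj.mp (by rwa [SimpleGraph.dist_comm] at hm2), hum⟩

/-- Sign lemma: opposite edges of a square cut every vertex the same way. -/
private lemma square_sign (hmed : MedianGraph G) {a b c e : V}
    (hsq : IsSquare G a b c e) (z : V)
    (h : G.dist z a < G.dist z b) : G.dist z c < G.dist z e := by
  obtain ⟨hab, hce, hac, hbe, hae, hbc⟩ := hsq
  by_contra h'
  have h1 : G.dist z b = G.dist z a + 1 := by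
    rcases adj_dist_cases hmed hab z with hh | hh <;> omega
  have h2 : G.dist z c = G.dist z e + 1 := by
    rcases adj_dist_cases hmed hce z with hh | hh <;> omega
  rcases adj_dist_cases hmed hac z with h3 | h3
  · -- dist z c = dist z a + 1, so dist z e = dist z a, dist z b = dist z a + 1
    -- two medians of (b, c, z): a and e
    have hbc2 : G.dist b c = 2 := dist_two hmed hab hac hbc
    obtain ⟨m, -, huniq⟩ := hmed.2 b c z
    have hza : G.dist a z = G.dist z a := SimpleGraph.dist_comm
    have hze : G.dist e z = G.dist z e := SimpleGraph.dist_comm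
    have hzb : G.dist b z = G.dist z b := SimpleGraph.dist_comm
    have hzc : G.dist c z = G.dist z c := SimpleGraph.dist_comm
    have dba : G.dist b a = 1 := SimpleGraph.dist_eq_one_iff_adj.mpr hab.symm
    have dac : G.dist a c = 1 := SimpleGraph.dist_eq_one_iff_adj.mpr hac
    have dbe : G.dist b e = 1 := SimpleGraph.dist_eq_one_iff_adj.mpr hbe
    have dec : G.dist e c = 1 := SimpleGraph.dist_eq_one_iff_adj.mpr hce.symm
    have dab : G.dist a b = 1 := SimpleGraph.dist_eq_one_iff_adj.mpr hab
    have deb : G.dist e b = 1 := SimpleGraph.dist_eq_one_iff_adj.mpr hbe.symm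
    have dca : G.dist c a = 1 := SimpleGraph.dist_eq_one_iff_adj.mpr hac.symm
    have dce : G.dist c e = 1 := SimpleGraph.dist_eq_one_iff_adj.mpr hce
    have hma : m = a := by
      refine (huniq a ⟨?_, ?_, ?_⟩).symm <;> rw [mem_interval_iff] <;> omega
    have hme : m = e := by
      refine (huniq e ⟨?_, ?_, ?_⟩).symm <;> rw [mem_interval_iff] <;> omega
    exact hae (hma ▸ hme)
  · rcases adj_dist_cases hmed hbe z with h4 | h4 <;> omega

private lemma isSquare_symm {a b c e : V} (hsq : IsSquare G a b c e) :
    IsSquare G c e a b :=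
  ⟨hsq.2.1, hsq.1, hsq.2.2.1.symm, hsq.2.2.2.1.symm, hsq.2.2.2.2.2.symm,
    hsq.2.2.2.2.1.symm⟩

private lemma square_sign_iff (hmed : MedianGraph G) {a b c e : V}
    (hsq : IsSquare G a b c e) (z : V) :
    (G.dist z a < G.dist z b ↔ G.dist z c < G.dist z e) :=
  ⟨square_sign hmed hsq z, square_sign hmed (isSquare_symm hsq) z⟩

/-- The coherence predicate: the edge `f` is cut the same way by `u` and `v`. -/
private def Good (G : SimpleGraph V) (u v : V) (f : Sym2 V) : Prop :=
  ∀ a b : V, f = s(a, b) → G.Adj a b →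
    (G.dist u a < G.dist u b ↔ G.dist v a < G.dist v b)

private lemma good_theta0 (hmed : MedianGraph G) (u v : V) {f g : Sym2 V}
    (h0 : Theta0 G f g) (hf : Good G u v f) : Good G u v g := by
  obtain ⟨a, b, c, e, hsq, rfl, rfl⟩ := h0
  have hab := hsq.1
  have hce := hsq.2.1
  have h1 := hf a b rfl hab
  have h2 := square_sign_iff hmed hsq u
  have h3 := square_sign_iff hmed hsq v
  have hiff : G.dist u c < G.dist u e ↔ G.dist v c < G.dist v e := by
    rw [← h2, ← h3]; exact h1
  intro a' b' heq hadj'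
  rw [Sym2.eq_iff] at heq
  have hnu : G.dist u c ≠ G.dist u e := adj_dist_ne hmed hce u
  have hnv : G.dist v c ≠ G.dist v e := adj_dist_ne hmed hce v
  rcases heq with ⟨rfl, rfl⟩ | ⟨rfl, rfl⟩
  · exact hiff
  · omega

private lemma good_theta (hmed : MedianGraph G) (u v : V) {f g : Sym2 V}
    (h : Relation.ReflTransGen (Theta0 G) f g) (hf : Good G u v f) :
    Good G u v g := by
  induction h with
  | refl => exact hf
  | tail _ hstep ih => exact good_theta0 hmed u v hstep ih

private lemma theta0_symm : Symmetric (Theta0 G) := by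
  rintro f g ⟨a, b, c, e, hsq, rfl, rfl⟩
  exact ⟨c, e, a, b, isSquare_symm hsq, rfl, rfl⟩

private lemma theta_symm {f g : Sym2 V} (h : Theta G f g) : Theta G g f :=
  ⟨h.2.1, h.1, (haveI : Std.Symm (Theta0 G) := ⟨fun _ _ hh => theta0_symm hh⟩
    Relation.ReflTransGen.symmetric.symm _ _ h.2.2)⟩

private lemma theta_trans {f g h : Sym2 V} (h1 : Theta G f g) (h2 : Theta G g h) :
    Theta G f h :=
  ⟨h1.1, h2.2.1, h1.2.2.trans h2.2.2⟩

/-- Two Θ-classes sharing an edge are equal. -/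
private lemma class_eq {C C' : Set (Sym2 V)} (hC : ThetaClass G C)
    (hC' : ThetaClass G C') {g : Sym2 V} (hg : g ∈ C) (hg' : g ∈ C') : C = C' := by
  obtain ⟨e, -, rfl⟩ := hC
  obtain ⟨e', -, rfl⟩ := hC'
  have hg : Theta G e g := hg
  have hg' : Theta G e' g := hg'
  ext f
  constructor
  · intro hf
    exact theta_trans hg' (theta_trans (theta_symm hg) hf)
  · intro hf
    exact theta_trans hg (theta_trans (theta_symm hg') hf)

/-- A Θ-class is closed under Θ₀-steps among graph edges. -/
private lemma class_step {C : Set (Sym2 V)} (hC : ThetaClass G C) {f g : Sym2 V}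
    (hf : f ∈ C) (h0 : Theta0 G f g) (hg : g ∈ G.edgeSet) : g ∈ C := by
  obtain ⟨e, he, rfl⟩ := hC
  have hf : Theta G e f := hf
  exact ⟨hf.1, hg, hf.2.2.tail h0⟩

/-- Every edge of a Θ-class of the signature of `(u,v)` is coherent w.r.t. `u,v`. -/
private lemma good_of_mem_class (hmed : MedianGraph G) {u v w : V}
    {C : Set (Sym2 V)} (hC : ThetaClass G C) (hadj : G.Adj u w)
    (hmem : s(u, w) ∈ C) (hgood : Good G u v s(u, w)) :
    ∀ f ∈ C, Good G u v f := by
  obtain ⟨e, he, rfl⟩ := hC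
  intro f hf
  have h1 : Theta G e s(u, w) := hmem
  have h2 : Theta G e f := hf
  have h3 : Theta G s(u, w) f := theta_trans (theta_symm h1) h2
  exact good_theta hmed u v h3.2.2 hgood

/-- On a shortest `(x,v)`-walk lying on a geodesic through `u`,
no edge is coherent-cut between `u` and `v` with a class `C` all of whose
edges are `Good`. -/
private lemma shortest_walk_avoids (hmed : MedianGraph G) {u v : V}
    {C : Set (Sym2 V)} (hgood : ∀ f ∈ C, Good G u v f) :
    ∀ (x : V) (p : G.Walk x v), p.length = G.dist x v →
      G.dist u v = G.dist u x + G.dist x v → ∀ e ∈ p.edges, e ∉ C := by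
  intro x p
  induction p with
  | nil => intro _ _ e he; simp at he
  | @cons x y v hxy q ih =>
    intro hlen hgeo e he
    have hconn := hmed.1
    rw [SimpleGraph.Walk.length_cons] at hlen
    have hdyv : G.dist y v ≤ q.length := SimpleGraph.dist_le q
    have hdxy : G.dist x y = 1 := SimpleGraph.dist_eq_one_iff_adj.mpr hxy
    have htri : G.dist x v ≤ G.dist x y + G.dist y v := hconn.dist_triangle
    have hq : q.length = G.dist y v := by omega
    have hxv : G.dist x v = G.dist y v + 1 := by omega
    have hduy : G.dist u y = G.dist u x + 1 := by
      have h1 : G.dist u y ≤ G.dist u x + G.dist x y := hconn.dist_triangle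
      have h2 : G.dist u v ≤ G.dist u y + G.dist y v := hconn.dist_triangle
      omega
    have hgeo' : G.dist u v = G.dist u y + G.dist y v := by omega
    rw [SimpleGraph.Walk.edges_cons] at he
    rcases List.mem_cons.mp he with rfl | he'
    · intro hmem
      have hg := hgood _ hmem x y rfl hxy
      have hvx : G.dist v x = G.dist x v := SimpleGraph.dist_comm
      have hvy : G.dist v y = G.dist y v := SimpleGraph.dist_comm
      omega
    · exact ih hgood hq hgeo' e he'

/-- Any edge of a separating Θ-class incident to `u` goes towards `v`. -/
private lemma ladder_edge_toward (hmed : MedianGraph G) {u v w : V}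
    {C : Set (Sym2 V)} (hC : C ∈ signature G u v) (hadj : G.Adj u w)
    (hmem : s(u, w) ∈ C) : G.dist u v = G.dist w v + 1 := by
  obtain ⟨hclass, hsep⟩ := hC
  have hconn := hmed.1
  rcases adj_dist_cases hmed hadj v with haway | htow
  · -- w is away from v: contradiction with separation
    exfalso
    have hduw : G.dist u w = 1 := SimpleGraph.dist_eq_one_iff_adj.mpr hadj
    have hgood0 : Good G u v s(u, w) := by
      intro a b heq hadj'
      rw [Sym2.eq_iff] at heq
      have hduu : G.dist u u = 0 := SimpleGraph.dist_self
      rcases heq with ⟨rfl, rfl⟩ | ⟨rfl, rfl⟩ <;> omega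
    have hgood := good_of_mem_class hmed hclass hadj hmem hgood0
    obtain ⟨p, hp⟩ := hconn.exists_walk_length_eq_dist u v
    have hdiv : G.dist u v = G.dist u u + G.dist u v := by
      rw [SimpleGraph.dist_self]; omega
    have havoid := shortest_walk_avoids hmed hgood u p hp hdiv
    exact hsep ⟨p.toDeleteEdges C havoid⟩
  · rw [SimpleGraph.dist_comm, htow, SimpleGraph.dist_comm]

/-- Key construction: for two distinct ladder classes at `u`, complete the square. -/
private lemma ortho_core (hmed : MedianGraph G) {u v w w' : V}
    {C C' : Set (Sym2 V)} (hC : C ∈ ladder G u v) (hC' : C' ∈ ladder G u v)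
    (hne : C ≠ C') (hw : G.Adj u w) (hmw : s(u, w) ∈ C)
    (hw' : G.Adj u w') (hmw' : s(u, w') ∈ C') :
    ∃ m, G.Adj w m ∧ G.Adj w' m ∧ u ≠ m ∧ w ≠ w' ∧
      s(w', m) ∈ C ∧ s(w, m) ∈ C' := by
  have hcl : ThetaClass G C := hC.1.1
  have hcl' : ThetaClass G C' := hC'.1.1
  have hww' : w ≠ w' := by
    rintro rfl
    exact hne (class_eq hcl hcl' hmw hmw')
  have ht1 : G.dist u v = G.dist w v + 1 := ladder_edge_toward hmed hC.1 hw hmw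
  have ht2 : G.dist u v = G.dist w' v + 1 := ladder_edge_toward hmed hC'.1 hw' hmw'
  obtain ⟨m, hwm, hw'm, hum⟩ := quadrangle hmed hw hw' hww' ht1 ht2
  have sq1 : IsSquare G u w w' m := ⟨hw, hw'm, hw', hwm, hum, hww'⟩
  have sq2 : IsSquare G u w' w m := ⟨hw', hwm, hw, hw'm, hum, hww'.symm⟩
  refine ⟨m, hwm, hw'm, hum, hww', ?_, ?_⟩
  · exact class_step hcl hmw ⟨u, w, w', m, sq1, rfl, rfl⟩ hw'm
  · exact class_step hcl' hmw' ⟨u, w', w, m, sq2, rfl, rfl⟩ hwm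

/-- The prefix lemma, proved by strong induction on the distance. -/
private lemma ladder_prefix [Fintype V] (hmed : MedianGraph G) (v : V) :
    ∀ (n : ℕ) (u : V), G.dist u v = n → ∀ M ⊆ ladder G u v,
      ∃ p : G.Walk u v, p.length = G.dist u v ∧
        ∀ e ∈ p.edges.take M.ncard, ∃ C ∈ M, e ∈ C := by
  intro n
  induction n using Nat.strong_induction_on with
  | _ n ih =>
    intro u hdist M hM
    rcases M.eq_empty_or_nonempty with rfl | ⟨C, hCM⟩
    · obtain ⟨p, hp⟩ := hmed.1.exists_walk_length_eq_dist u v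
      refine ⟨p, hp, ?_⟩
      intro e he
      simp [Set.ncard_empty] at he
    · have hCl : C ∈ ladder G u v := hM hCM
      obtain ⟨hCsig, w, hadj, hmem⟩ := hCl
      have htow : G.dist u v = G.dist w v + 1 :=
        ladder_edge_toward hmed hCsig hadj hmem
      have huv : u ≠ v := by
        intro h; subst h; exact hCsig.2 (SimpleGraph.Reachable.refl u)
      have hd0 : G.dist u v ≠ 0 := fun h => huv (hmed.1.dist_eq_zero_iff.mp h)
      -- M \ {C} ⊆ ladder G w v
      have hsub : M \ {C} ⊆ ladder G w v := by
        rintro C' ⟨hC'M, hC'ne⟩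
        have hC'ne : C' ≠ C := hC'ne
        obtain ⟨hC'sig, w', hadj', hmem'⟩ := hM hC'M
        have hsep' : Separates G C' w v := by
          intro hreach
          have hnm : s(u, w) ∉ C' := by
            intro hmem2
            exact hC'ne (class_eq hC'sig.1 hCsig.1 hmem2 hmem)
          have hadj2 : (G.deleteEdges C').Adj u w := by
            rw [SimpleGraph.deleteEdges_adj]; exact ⟨hadj, hnm⟩
          exact hC'sig.2 (hadj2.reachable.trans hreach)
        obtain ⟨m, hwm, -, -, -, -, hwmC'⟩ :=
          ortho_core hmed ⟨hCsig, w, hadj, hmem⟩ ⟨hC'sig, w', hadj', hmem'⟩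
            hC'ne.symm hadj hmem hadj' hmem'
        exact ⟨⟨hC'sig.1, hsep'⟩, m, hwm, hwmC'⟩
      have hdw : G.dist w v < n := by omega
      obtain ⟨p', hlen', hpref'⟩ := ih (G.dist w v) hdw w rfl (M \ {C}) hsub
      refine ⟨SimpleGraph.Walk.cons hadj p', ?_, ?_⟩
      · rw [SimpleGraph.Walk.length_cons, hlen']; omega
      · have hcard : (M \ {C}).ncard + 1 = M.ncard :=
          Set.ncard_diff_singleton_add_one hCM M.toFinite
        intro e he
        rw [SimpleGraph.Walk.edges_cons, ← hcard, List.take_succ_cons] at he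
        rcases List.mem_cons.mp he with rfl | he'
        · exact ⟨C, hCM, hmem⟩
        · obtain ⟨C', hC'M, heC'⟩ := hpref' e he'
          exact ⟨C', hC'M.1, heC'⟩

end Aux

/-- In a median graph with basepoint `v₀`, if `u ∈ I(v₀,v)` then
the ladder set `L_{u,v}` is a POF, and some shortest `(u,v)`-path starts with
`|L_{u,v}|` edges whose classes belong to `L_{u,v}`. -/
theorem ladder_is_pof_and_prefix {V : Type*} [Fintype V] (G : SimpleGraph V)
    (hmed : MedianGraph G) (v₀ u v : V) (hu : u ∈ interval G v₀ v) :
    IsPOF G (ladder G u v) ∧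
    ∃ p : G.Walk u v, p.length = G.dist u v ∧
      ∀ e ∈ p.edges.take (ladder G u v).ncard, ∃ C ∈ ladder G u v, e ∈ C := by
  constructor
  · refine ⟨fun C hC => hC.1.1, ?_⟩
    intro C hC C' hC' hne
    obtain ⟨hCsig, w, hw, hmw⟩ := hC
    obtain ⟨hC'sig, w', hw', hmw'⟩ := hC'
    obtain ⟨m, hwm, hw'm, hum, hww', hC'm, hCm⟩ :=
      ortho_core hmed ⟨hCsig, w, hw, hmw⟩ ⟨hC'sig, w', hw', hmw'⟩ hne hw hmw hw' hmw'
    exact ⟨u, w, w', m, ⟨hw, hw'm, hw', hwm, hum, hww'⟩, hmw, hC'm, hmw', hCm⟩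
  · exact ladder_prefix hmed v (G.dist u v) u rfl (ladder G u v) (le_refl _)

end MedianPaper
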